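/- Let (X_k)_{k∈ω} be a countable family of K-analytic Tychonoff spaces such that at least one X_k is not compact. Then Compl(⊕_{k∈ω} X_k) = { sup_{k∈ω} f(k) : f ∈ ∏_{k∈ω} Compl(X_k) }, where ⊕ denotes the topological sum; that is, the set of complexities attainable by the topological sum consists exactly of the suprema of all selectors of the sets Compl(X_k). -/

import Mathlib

noncomputable section
open Classical Set Topology Filter Ordinal

universe u v

namespace FBorelPaper

/-! ### Ordinal parity -/

/-- The first uncountable ordinal. -/
def omega1 : Ordinal.{0} := Ordinal.omega 1

/-- An ordinal `a = λ + m` (with `λ` limit or zero, `m < ω`) is *even* iff `m` is even. -/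
def EvenOrd (a : Ordinal.{0}) : Prop := a % 2 = 0

/-- An ordinal `a = λ + m` (with `λ` limit or zero, `m < ω`) is *odd* iff `m` is odd. -/
def OddOrd (a : Ordinal.{0}) : Prop := a % 2 = 1

/-- For `a = λ + 2n + i` (with `λ` limit or zero, `n < ω`, `i ∈ {0,1}`),
`ordPrime a = λ + n` (the ordinal `α'` of the paper). -/
def ordPrime (a : Ordinal.{0}) : Ordinal.{0} :=
  Ordinal.omega0 * (a / Ordinal.omega0) + (a % Ordinal.omega0) / 2

/-! ### The F-Borel hierarchy -/

/-- The `F`-Borel hierarchy of a topological space: `FBorel Y 0` is the family of closed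
sets, and for `0 < a`, `FBorel Y a` consists of all countable unions (for odd `a`),
resp. countable intersections (for even `a`), of members of `⋃ b < a, FBorel Y b`. -/
def FBorel (Y : Type u) [TopologicalSpace Y] : Ordinal.{0} → Set (Set Y) :=
  WellFounded.fix Ordinal.lt_wf (C := fun _ => Set (Set Y)) fun a ih =>
    if a = 0 then { F | IsClosed F }
    else if EvenOrd a then
      { S | ∃ f : ℕ → Set Y, (∀ n, ∃ b, ∃ h : b < a, f n ∈ ih b h) ∧ S = ⋂ n, f n }
    else
      { S | ∃ f : ℕ → Set Y, (∀ n, ∃ b, ∃ h : b < a, f n ∈ ih b h) ∧ S = ⋃ n, f n }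

/-- The list `(σ 0, …, σ (k-1))` of the first `k` values of `σ : ℕ → ℕ`. -/
def seqPrefix (σ : ℕ → ℕ) (k : ℕ) : List ℕ := List.ofFn fun i : Fin k => σ i

/-- A Suslin scheme: a monotone family of sets indexed by finite sequences. -/
def IsSuslinScheme {Y : Type u} (C : List ℕ → Set Y) : Prop :=
  ∀ ⦃s t : List ℕ⦄, s <+: t → C t ⊆ C s

/-- The Suslin operation `A(C) = ⋃_{σ ∈ ω^ω} ⋂_k C(σ|k)`. -/
def suslinOp {Y : Type u} (C : List ℕ → Set Y) : Set Y :=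
  ⋃ σ : ℕ → ℕ, ⋂ k : ℕ, C (seqPrefix σ k)

/-- The Suslin-F subsets of `Y`: results of the Suslin operation applied to schemes of
closed sets. -/
def SuslinF (Y : Type u) [TopologicalSpace Y] : Set (Set Y) :=
  { S | ∃ C : List ℕ → Set Y, (∀ s, IsClosed (C s)) ∧ S = suslinOp C }

/-- The classes `F_a(Y)` for `a ≤ ω₁`, where `F_{ω₁}(Y)` is the class of Suslin-F sets. -/
def FClass (Y : Type u) [TopologicalSpace Y] (a : Ordinal.{0}) : Set (Set Y) :=
  if a < omega1 then FBorel Y a else SuslinF Y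

/-- `ComplIn Y X` is the complexity of `X` in `Y`: the least `a ≤ ω₁` with `X ∈ F_a(Y)`. -/
def ComplIn (Y : Type u) [TopologicalSpace Y] (X : Set Y) : Ordinal.{0} :=
  sInf { a : Ordinal.{0} | a ≤ omega1 ∧ X ∈ FClass Y a }

/-! ### Compactifications, K-analytic spaces, local complexity -/

/-- `(K, e)` is a compactification of `X`: `K` is compact Hausdorff and `e` is a dense
embedding of `X` into `K`. -/
def IsCompactification (X : Type u) [TopologicalSpace X] (K : Type u) [TopologicalSpace K]
    (e : X → K) : Prop :=
  CompactSpace K ∧ T2Space K ∧ IsEmbedding e ∧ DenseRange e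

/-- The set `Compl(X)` of all complexities attained by `X` in its compactifications. -/
def AttainedCompl (X : Type u) [TopologicalSpace X] : Set Ordinal.{0} :=
  { γ | ∃ (K : Type u) (_ : TopologicalSpace K) (e : X → K),
      IsCompactification X K e ∧ Set.range e ∈ SuslinF K ∧ γ = ComplIn K (Set.range e) }

/-- A topological space is K-analytic iff it embeds as a Suslin-F subset of some compact
Hausdorff space. -/
def IsKAnalytic (X : Type u) [TopologicalSpace X] : Prop :=
  ∃ (K : Type u) (_ : TopologicalSpace K) (e : X → K),
    CompactSpace K ∧ T2Space K ∧ IsEmbedding e ∧ Set.range e ∈ SuslinF K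

/-- The local complexity `Compl_y(X, Y)`: the least complexity of `cl(U) ∩ X` in `Y` over
all open neighborhoods `U` of `y` in `Y`. -/
def locComplAt (Y : Type u) [TopologicalSpace Y] (X : Set Y) (y : Y) : Ordinal.{0} :=
  sInf { γ : Ordinal.{0} | ∃ U : Set Y, IsOpen U ∧ y ∈ U ∧ γ = ComplIn Y (closure U ∩ X) }

/-- The local complexity `Compl_loc(X, Y) = sup_{x ∈ X} Compl_x(X, Y)`. -/
def locCompl (Y : Type u) [TopologicalSpace Y] (X : Set Y) : Ordinal.{0} :=
  ⨆ x : X, locComplAt Y X (x : Y)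

/-- The local complexity `Compl_locbar(X, Y) = sup_{y ∈ Y} Compl_y(X, Y)`. -/
def locComplBar (Y : Type u) [TopologicalSpace Y] (X : Set Y) : Ordinal.{0} :=
  ⨆ y : Y, locComplAt Y X y

/-! ### Trees on ω -/

/-- A tree on `ω`: a set of finite sequences closed under initial segments. -/
def IsTree (T : Set (List ℕ)) : Prop := ∀ ⦃s t : List ℕ⦄, s <+: t → t ∈ T → s ∈ T

/-- A tree is well-founded iff it carries no infinite branch. -/
def WellFoundedTree (T : Set (List ℕ)) : Prop := ¬ ∃ σ : ℕ → ℕ, ∀ k : ℕ, seqPrefix σ k ∈ T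

/-- `t` is a leaf of `T`: it belongs to `T` and has no immediate successor in `T`. -/
def IsLeafOf (T : Set (List ℕ)) (t : List ℕ) : Prop := t ∈ T ∧ ∀ n : ℕ, t ++ [n] ∉ T

/-- The tree `T^t = {s | t⌢s ∈ T}` corresponding to `t` in `T`. -/
def subtreeAt (T : Set (List ℕ)) (t : List ℕ) : Set (List ℕ) := { s | t ++ s ∈ T }

/-- The smallest tree containing a set `S` of finite sequences. -/
def clTr (S : Set (List ℕ)) : Set (List ℕ) := { u | ∃ s ∈ S, u <+: s }

/-- The leaf derivative: keep the elements having some proper extension in `T`. -/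
def leafDeriv (T : Set (List ℕ)) : Set (List ℕ) := { t ∈ T | ∃ s ∈ T, t <+: s ∧ t ≠ s }

/-- The derivative `D_iie`: keep the `t ∈ T` admitting infinitely many pairwise
incomparable extensions in `T` of pairwise different lengths. -/
def Diie (T : Set (List ℕ)) : Set (List ℕ) :=
  { t ∈ T | ∃ g : ℕ → List ℕ, (∀ n, g n ∈ T ∧ t <+: g n) ∧
      ∀ ⦃m n : ℕ⦄, m < n →
        (¬ g m <+: g n) ∧ (¬ g n <+: g m) ∧ (g m).length ≠ (g n).length }

/-- Transfinitely iterated derivative, starting from `cl_Tr S` and taking intersections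
at limit stages. -/
def iterDeriv (D : Set (List ℕ) → Set (List ℕ)) (S : Set (List ℕ)) (γ : Ordinal.{0}) :
    Set (List ℕ) :=
  Ordinal.limitRecOn γ (clTr S) (fun _ ih => D ih)
    (fun a _ ih => ⋂ b : Ordinal.{0}, ⋂ h : b < a, ih b h)

/-- The rank associated with the leaf derivative: the least `γ` such that the `(γ+1)`-st
iterated leaf derivative is empty, and `ω₁` if there is no such countable ordinal. -/
def leafRank (T : Set (List ℕ)) : Ordinal.{0} :=
  if ∃ γ : Ordinal.{0}, γ < omega1 ∧ iterDeriv leafDeriv T (γ + 1) = ∅ then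
    sInf { γ : Ordinal.{0} | iterDeriv leafDeriv T (γ + 1) = ∅ }
  else omega1

/-- `E` is the canonical extension of the `l(T)`-scheme `H` to the whole of `T`:
it agrees with `H` on the leaves of `T`, and at a non-leaf `t ∈ T` it is the union
(resp. the intersection) of its values at the immediate successors of `t` in `T` when
the leaf-rank of `T^t` is odd (resp. even). -/
def IsSchemeExtension (Y : Type u) [TopologicalSpace Y] (T : Set (List ℕ))
    (H E : List ℕ → Set Y) : Prop :=
  (∀ t, IsLeafOf T t → E t = H t) ∧
  (∀ t ∈ T, ¬ IsLeafOf T t → OddOrd (leafRank (subtreeAt T t)) →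
      E t = ⋃ n ∈ { n : ℕ | t ++ [n] ∈ T }, E (t ++ [n])) ∧
  (∀ t ∈ T, ¬ IsLeafOf T t → EvenOrd (leafRank (subtreeAt T t)) →
      E t = ⋂ n ∈ { n : ℕ | t ++ [n] ∈ T }, E (t ++ [n]))

/-- `H` (an `l(T)`-scheme of subsets of `X`) is a *universal simple `F_α`-representation*
of `X`: `r_l(T) ≤ α`, and for every space `Y` containing (a copy of) `X`, the extension
of the scheme of closures `(cl_Y (H t))_t` computes `X` at the root. -/
def HasUniversalSimpleRep (X : Type u) [TopologicalSpace X] (α : Ordinal.{0}) : Prop :=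
  ∃ (T : Set (List ℕ)) (H : List ℕ → Set X), IsTree T ∧ WellFoundedTree T ∧ [] ∈ T ∧
    leafRank T ≤ α ∧
    ∀ (Y : Type u) (_ : TopologicalSpace Y) (e : X → Y), IsEmbedding e →
      ∃ E : List ℕ → Set Y,
        IsSchemeExtension Y T (fun t => closure (e '' H t)) E ∧ E [] = Set.range e

/-! ### Canonical trees -/

/-- Auxiliary indices for the canonical trees: at a successor `a = b + 1` every index is
`b`, and at a countable limit the indices enumerate all ordinals `< a` injectively. -/
def canonIdx (a : Ordinal.{0}) (n : ℕ) : Ordinal.{0} :=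
  if hs : ∃ b, a = b + 1 then hs.choose
  else if hf : ∃ f : ℕ → Ordinal.{0}, Function.Injective f ∧ Set.range f = Set.Iio a then
    hf.choose n
  else 0

theorem canonIdx_lt {a : Ordinal.{0}} (h0 : a ≠ 0) (n : ℕ) : canonIdx a n < a := by
  unfold canonIdx
  split
  · next hs =>
      conv_rhs => rw [hs.choose_spec]
      rw [Ordinal.add_one_eq_succ]
      exact Order.lt_succ _
  · split
    · next hf =>
        have hmem : hf.choose n ∈ Set.range hf.choose := Set.mem_range_self n
        rw [hf.choose_spec.2] at hmem
        exact hmem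
    · first | exact pos_iff_ne_zero.mpr h0 | exact Ordinal.pos_of_ne_zero h0 | exact lt_of_le_of_ne (Ordinal.zero_le _) (Ne.symm h0)

/-- The canonical "maximal" trees `T_α` of leaf-rank `α < ω₁` (with `T_α = ω^{<ω}` for
`α ≥ ω₁`): `T_0 = {∅}`, `T_{α+1} = {∅} ∪ ⋃_n n⌢T_α`, and at countable limits
`T_α = {∅} ∪ ⋃_n n⌢T_{π_α(n)}` for an injective enumeration `π_α` of `α`. -/
def canonTree : Ordinal.{0} → Set (List ℕ) :=
  WellFounded.fix Ordinal.lt_wf (C := fun _ => Set (List ℕ)) fun a ih =>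
    if h0 : a = 0 then {([] : List ℕ)}
    else if omega1 ≤ a then Set.univ
    else {([] : List ℕ)} ∪ ⋃ n : ℕ, (List.cons n) '' ih (canonIdx a n) (canonIdx_lt h0 n)

/-- The canonical trees `T^c_α`: `T_{α'}` for even `α`, and `{∅} ∪ 1⌢T_{α'}` for odd `α`. -/
def canonTreeC (a : Ordinal.{0}) : Set (List ℕ) :=
  if EvenOrd a then canonTree (ordPrime a)
  else {([] : List ℕ)} ∪ (List.cons 1) '' canonTree (ordPrime a)

/-- The canonical trees `T^c_{α,i} = {∅} ∪ i⌢T_{α'}` (for odd `α`). -/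
def canonTreeCi (a : Ordinal.{0}) (i : ℕ) : Set (List ℕ) :=
  {([] : List ℕ)} ∪ (List.cons i) '' canonTree (ordPrime a)

/-! ### Admissible maps, `R_T` and regular representations -/

/-- An admissible map on a tree `T`: monotone w.r.t. extension, with
`|φ(t)| = t(0) + ⋯ + t(|t|-1)` for all `t ∈ T`. -/
def Admissible (T : Set (List ℕ)) (φ : List ℕ → List ℕ) : Prop :=
  (∀ ⦃s t : List ℕ⦄, s ∈ T → t ∈ T → s <+: t → φ s <+: φ t) ∧
  (∀ t ∈ T, (φ t).length = t.sum)

/-- `R_T(C)`: the points of `C(∅)` admitting an admissible witness map along `T`. -/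
def RT {Y : Type u} (T : Set (List ℕ)) (C : List ℕ → Set Y) : Set Y :=
  { x | x ∈ C [] ∧ ∃ φ : List ℕ → List ℕ, Admissible T φ ∧ ∀ t ∈ T, x ∈ C (φ t) }

/-- `R_α(C) = R_{T^c_α}(C)`. -/
def Ralpha {Y : Type u} (a : Ordinal.{0}) (C : List ℕ → Set Y) : Set Y :=
  RT (canonTreeC a) C

/-- A Suslin scheme `C` of subsets of `X ⊆ Y` is *complete on `X`*: it is a Suslin scheme
on `X` (it consists of subsets of `X` and the Suslin operation applied to it covers `X`)
such that every nontrivial filter containing, for each `n`, a set `C s` with `|s| = n`,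
has an accumulation point in `X`. -/
def IsCompleteOn (Y : Type u) [TopologicalSpace Y] (X : Set Y) (C : List ℕ → Set Y) :
    Prop :=
  IsSuslinScheme C ∧ (∀ s, C s ⊆ X) ∧ X ⊆ suslinOp C ∧
  ∀ F : Filter Y, F.NeBot → (∀ n : ℕ, ∃ s : List ℕ, s.length = n ∧ C s ∈ F) →
    ∃ x ∈ X, ClusterPt x F

/-- The tree `S_C(y)` of finite sequences `s` with `y ∈ cl_Y (C s)`. -/
def SCtree (Y : Type u) [TopologicalSpace Y] (C : List ℕ → Set Y) (y : Y) :
    Set (List ℕ) :=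
  { s : List ℕ | y ∈ closure (C s) }

/-! ### Zoom spaces -/

/-- The set of isolated points of a topological space. -/
def IsolPts (Y : Type u) [TopologicalSpace Y] : Set Y := { y | IsOpen ({y} : Set Y) }

/-- The underlying set of the zoom space `Z(Y, X)`: the non-isolated points of `Y`
together with the disjoint union of the spaces `X i`, `i ∈ I_Y`. -/
def ZoomCarrier (Y : Type u) [TopologicalSpace Y] (X : IsolPts Y → Type v) :
    Type (max u v) :=
  ({ y : Y // y ∉ IsolPts Y }) ⊕ ((i : IsolPts Y) × X i)

/-- The basic set `V_U ⊆ Z(Y, X)` associated with `U ⊆ Y`: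
`V_U = (U ∖ I_Y) ∪ ⋃ {X i | i ∈ U ∩ I_Y}`. -/
def zoomVSet (Y : Type u) [TopologicalSpace Y] (X : IsolPts Y → Type v) (U : Set Y) :
    Set (ZoomCarrier Y X) :=
  { z | Sum.elim (fun y : { y : Y // y ∉ IsolPts Y } => (y : Y) ∈ U)
      (fun p : (i : IsolPts Y) × X i => (p.1 : Y) ∈ U) z }

/-- The topology of the zoom space `Z(Y, X)`, generated by the open subsets of the
spaces `X i` together with the sets `V_U` for `U` open in `Y`. -/
instance zoomTopology (Y : Type u) [TopologicalSpace Y] (X : IsolPts Y → Type v)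
    [∀ i, TopologicalSpace (X i)] : TopologicalSpace (ZoomCarrier Y X) :=
  TopologicalSpace.generateFrom
    ({ B | ∃ (i : IsolPts Y) (W : Set (X i)), IsOpen W ∧
        B = Sum.inr '' ((Sigma.mk i) '' W) } ∪
     { B | ∃ U : Set Y, IsOpen U ∧ B = zoomVSet Y X U })

/-- The subset of `Z(Y, X)` which is the underlying set of the zoom space `Z(Ys, A)` of
a subspace `Ys ⊆ Y` with respect to subspaces `A i ⊆ X i`
(here the isolated points of `Ys` are identified with those of `Y`). -/
def zoomSub (Y : Type u) [TopologicalSpace Y] (X : IsolPts Y → Type v) (Ys : Set Y)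
    (A : ∀ i : IsolPts Y, Set (X i)) : Set (ZoomCarrier Y X) :=
  { z | Sum.elim (fun y : { y : Y // y ∉ IsolPts Y } => (y : Y) ∈ Ys)
      (fun p : (i : IsolPts Y) × X i => p.2 ∈ A p.1) z }

/-! ### Broom sets and broom spaces -/

/-- A forking sequence: a sequence of nonempty finite sequences with pairwise distinct
first entries. -/
def IsForking (f : ℕ → List ℕ) : Prop :=
  (∀ n, f n ≠ []) ∧ ∀ ⦃m n : ℕ⦄, m ≠ n → (f m).head? ≠ (f n).head?

/-- The hierarchy of finite broom sets: `B ∈ B_α` iff `IsBroomB α B`.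
`B_0 = {{∅}}`; for odd `α`, `B_α = B_{<α} ∪ {h⌢B | B ∈ B_{α-1}, h ∈ ω^{<ω}}`; for even
`α > 0`, `B_α = B_{<α} ∪ {⋃_n f_n⌢B_n | B_n ∈ B_{<α}, (f_n) a forking sequence}`. -/
inductive IsBroomB : Ordinal.{0} → Set (List ℕ) → Prop
  | base : IsBroomB 0 {[]}
  | mono {β α : Ordinal.{0}} {B : Set (List ℕ)} : β < α → IsBroomB β B → IsBroomB α B
  | odd {β : Ordinal.{0}} {B : Set (List ℕ)} (h : List ℕ) : EvenOrd β → IsBroomB β B →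
      IsBroomB (β + 1) ((fun s => h ++ s) '' B)
  | even {α : Ordinal.{0}} {f : ℕ → List ℕ} {Bs : ℕ → Set (List ℕ)}
      (g : ℕ → Ordinal.{0}) :
      0 < α → EvenOrd α → IsForking f →
      (∀ n : ℕ, g n < α) → (∀ n : ℕ, IsBroomB (g n) (Bs n)) →
      IsBroomB α (⋃ n : ℕ, (fun s => f n ++ s) '' Bs n)

/-- The infinite sequence `s⌢ν` obtained by extending the finite sequence `s` by `ν`. -/
def seqAppend (s : List ℕ) (ν : ℕ → ℕ) : ℕ → ℕ :=
  fun k => if h : k < s.length then s.get ⟨k, h⟩ else ν (k - s.length)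

/-- `A` is a broom-extension of `B`:
`A = {s⌢f^s_n⌢ν^s_n | s ∈ B, n ∈ ω}` for forking sequences `(f^s_n)_n, s ∈ B`, and
points `ν^s_n ∈ ω^ω`. -/
def IsBroomExtension (B : Set (List ℕ)) (A : Set (ℕ → ℕ)) : Prop :=
  ∃ (f : List ℕ → ℕ → List ℕ) (ν : List ℕ → ℕ → (ℕ → ℕ)),
    (∀ s ∈ B, IsForking (f s)) ∧
    A = { σ : ℕ → ℕ | ∃ s ∈ B, ∃ n : ℕ, σ = seqAppend (s ++ f s n) (ν s n) }

/-- The hierarchy of infinite broom sets: `A ∈ A_α` iff `A` is a broom-extension of some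
`B ∈ B_α`. -/
def IsBroomA (α : Ordinal.{0}) (A : Set (ℕ → ℕ)) : Prop :=
  ∃ B : Set (List ℕ), IsBroomB α B ∧ IsBroomExtension B A

/-- `u` is a finite initial segment of the infinite sequence `σ`. -/
def InfExtends (u : List ℕ) (σ : ℕ → ℕ) : Prop := seqPrefix σ u.length = u

/-- The tree of all finite initial segments of members of a set of infinite sequences. -/
def clTrInf (S : Set (ℕ → ℕ)) : Set (List ℕ) := { u | ∃ σ ∈ S, InfExtends u σ }

/-- The broom space `T_𝒜` on `ω^ω ∪ {∞}` (with `∞ = none`): every point of `ω^ω` is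
isolated, and the neighborhood subbasis at `∞` consists of the complements of single
points of `ω^ω` and of the complements of the sets `A ∈ 𝒜`. -/
def broomTop (𝒜 : Set (Set (ℕ → ℕ))) : TopologicalSpace (Option (ℕ → ℕ)) :=
  TopologicalSpace.generateFrom
    ({ S | ∃ σ : ℕ → ℕ, S = {Option.some σ} } ∪
     { S | ∃ σ : ℕ → ℕ, S = insert Option.none (Option.some '' ({σ}ᶜ)) } ∪
     { S | ∃ A ∈ 𝒜, S = insert Option.none (Option.some '' Aᶜ) })


/-! ### Auxiliary lemmas for the proof of Statement 5 -/

section Aux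

variable {Y : Type u} [TopologicalSpace Y]

/-! #### Ordinal parity -/

theorem evenOrd_or_oddOrd (a : Ordinal.{0}) : EvenOrd a ∨ OddOrd a := by
  have h2 : (2 : Ordinal.{0}) ≠ 0 := by norm_num
  have h := Ordinal.mod_lt a h2
  have h1 : a % 2 ≤ 1 := by
    have h' : a % 2 < Order.succ (1 : Ordinal.{0}) :=
      lt_of_lt_of_eq h (by rw [← Ordinal.add_one_eq_succ]; norm_num)
    exact Order.lt_succ_iff.1 h'
  rcases Ordinal.le_one_iff.1 h1 with h | h
  · exact Or.inl h
  · exact Or.inr h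

theorem not_evenOrd_iff {a : Ordinal.{0}} : ¬ EvenOrd a ↔ OddOrd a := by
  constructor
  · intro h; rcases evenOrd_or_oddOrd a with h' | h'
    · exact absurd h' h
    · exact h'
  · intro h h'
    exact one_ne_zero ((h.symm.trans h') : (1 : Ordinal.{0}) = 0)

theorem evenOrd_zero : EvenOrd 0 := Ordinal.zero_mod 2

theorem oddOrd_one : OddOrd 1 := Ordinal.mod_eq_of_lt (by norm_num)

theorem OddOrd.ne_zero {a : Ordinal.{0}} (h : OddOrd a) : a ≠ 0 := by
  rintro rfl
  exact one_ne_zero ((Ordinal.zero_mod 2).symm.trans h).symm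

theorem EvenOrd.add_one_odd {a : Ordinal.{0}} (h : EvenOrd a) : OddOrd (a + 1) := by
  have ha : 2 * (a / 2) = a := by
    have := Ordinal.div_add_mod a 2
    rw [EvenOrd] at h
    rw [h, add_zero] at this
    exact this
  have : a + 1 = 2 * (a / 2) + 1 := by rw [ha]
  rw [OddOrd, this, Ordinal.mul_add_mod_self]
  exact Ordinal.mod_eq_of_lt (by norm_num)

theorem EvenOrd.ne_odd_succ {a b : Ordinal.{0}} (ha : EvenOrd a) (hb : EvenOrd b) :
    a ≠ b + 1 := by
  intro h
  have := hb.add_one_odd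
  rw [← h] at this
  exact (not_evenOrd_iff.2 this) ha

theorem exists_odd_btwn {α β : Ordinal.{0}} (hα : EvenOrd α) (h0 : α ≠ 0) (hβ : β < α) :
    ∃ δ : Ordinal.{0}, OddOrd δ ∧ β ≤ δ ∧ δ < α := by
  rcases evenOrd_or_oddOrd β with hb | hb
  · refine ⟨β + 1, hb.add_one_odd, le_of_lt (lt_add_one β), ?_⟩
    rcases lt_or_eq_of_le (Order.add_one_le_iff.2 hβ) with h | h
    · exact h
    · exact absurd h.symm (hα.ne_odd_succ hb)
  · exact ⟨β, hb, le_refl β, hβ⟩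

theorem one_lt_of_evenOrd {α : Ordinal.{0}} (hα : EvenOrd α) (h0 : α ≠ 0) : 1 < α := by
  rcases lt_trichotomy 1 α with h | h | h
  · exact h
  · exact absurd (h ▸ hα) (not_evenOrd_iff.2 oddOrd_one).elim
  · exact absurd (Ordinal.lt_one_iff_zero.1 h) h0

/-! #### Basic properties of the `F`-Borel classes -/

theorem FBorel_eq (a : Ordinal.{0}) :
    FBorel Y a = if a = 0 then { F | IsClosed F }
      else if EvenOrd a then
        { S | ∃ f : ℕ → Set Y, (∀ n, ∃ b, ∃ _ : b < a, f n ∈ FBorel Y b) ∧ S = ⋂ n, f n }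
      else
        { S | ∃ f : ℕ → Set Y, (∀ n, ∃ b, ∃ _ : b < a, f n ∈ FBorel Y b) ∧ S = ⋃ n, f n } :=
  WellFounded.fix_eq _ _ _

theorem mem_FBorel_zero {A : Set Y} : A ∈ FBorel Y 0 ↔ IsClosed A := by
  rw [FBorel_eq]; simp

theorem mem_FBorel_even {a : Ordinal.{0}} (h0 : a ≠ 0) (he : EvenOrd a) {A : Set Y} :
    A ∈ FBorel Y a ↔
      ∃ f : ℕ → Set Y, (∀ n, ∃ b, b < a ∧ f n ∈ FBorel Y b) ∧ A = ⋂ n, f n := by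
  rw [FBorel_eq, if_neg h0, if_pos he]
  constructor
  · rintro ⟨f, hf, rfl⟩
    exact ⟨f, fun n => by rcases hf n with ⟨b, hb, h⟩; exact ⟨b, hb, h⟩, rfl⟩
  · rintro ⟨f, hf, rfl⟩
    exact ⟨f, fun n => by rcases hf n with ⟨b, hb, h⟩; exact ⟨b, hb, h⟩, rfl⟩

theorem mem_FBorel_odd {a : Ordinal.{0}} (h0 : a ≠ 0) (he : ¬ EvenOrd a) {A : Set Y} :
    A ∈ FBorel Y a ↔
      ∃ f : ℕ → Set Y, (∀ n, ∃ b, b < a ∧ f n ∈ FBorel Y b) ∧ A = ⋃ n, f n := by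
  rw [FBorel_eq, if_neg h0, if_neg he]
  constructor
  · rintro ⟨f, hf, rfl⟩
    exact ⟨f, fun n => by rcases hf n with ⟨b, hb, h⟩; exact ⟨b, hb, h⟩, rfl⟩
  · rintro ⟨f, hf, rfl⟩
    exact ⟨f, fun n => by rcases hf n with ⟨b, hb, h⟩; exact ⟨b, hb, h⟩, rfl⟩

theorem FBorel_mono {b a : Ordinal.{0}} (h : b < a) : FBorel Y b ⊆ FBorel Y a := by
  intro A hA
  have h0 : a ≠ 0 := fun h' => by simp [h'] at h
  rcases evenOrd_or_oddOrd a with he | he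
  · exact (mem_FBorel_even h0 he).2 ⟨fun _ => A, fun n => ⟨b, h, hA⟩, (Set.iInter_const A).symm⟩
  · exact (mem_FBorel_odd h0 (not_evenOrd_iff.2 he)).2
      ⟨fun _ => A, fun n => ⟨b, h, hA⟩, (Set.iUnion_const A).symm⟩

theorem FBorel_mono_le {b a : Ordinal.{0}} (h : b ≤ a) : FBorel Y b ⊆ FBorel Y a := by
  rcases lt_or_eq_of_le h with h | h
  · exact FBorel_mono h
  · rw [h]

/-! #### Closure properties of the `F`-Borel classes -/

theorem iUnion_pair_eq {s : ℕ → ℕ → Set Y} :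
    ⋃ p : ℕ, s (Nat.unpair p).1 (Nat.unpair p).2 = ⋃ n, ⋃ m, s n m := by
  apply Set.Subset.antisymm
  · exact Set.iUnion_subset fun p =>
      Set.subset_iUnion₂ (s := fun n m => s n m) (Nat.unpair p).1 (Nat.unpair p).2
  · refine Set.iUnion₂_subset fun n m => ?_
    intro x hx
    exact Set.mem_iUnion.2 ⟨Nat.pair n m, by rw [Nat.unpair_pair]; exact hx⟩

theorem FBorel_iUnion_of_lt {a : Ordinal.{0}} (h0 : a ≠ 0) (he : ¬ EvenOrd a)
    {A : ℕ → Set Y} (hA : ∀ n, ∃ b, b < a ∧ A n ∈ FBorel Y b) :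
    (⋃ n, A n) ∈ FBorel Y a :=
  (mem_FBorel_odd h0 he).2 ⟨A, hA, rfl⟩

theorem FBorel_iInter_of_lt {a : Ordinal.{0}} (h0 : a ≠ 0) (he : EvenOrd a)
    {A : ℕ → Set Y} (hA : ∀ n, ∃ b, b < a ∧ A n ∈ FBorel Y b) :
    (⋂ n, A n) ∈ FBorel Y a :=
  (mem_FBorel_even h0 he).2 ⟨A, hA, rfl⟩

theorem FBorel_iUnion_of_odd {a : Ordinal.{0}} (ho : OddOrd a) {A : ℕ → Set Y}
    (hA : ∀ n, A n ∈ FBorel Y a) : (⋃ n, A n) ∈ FBorel Y a := by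
  have h0 : a ≠ 0 := ho.ne_zero
  have he : ¬ EvenOrd a := fun h => (not_evenOrd_iff.2 ho) h
  have key : ∀ n, ∃ g : ℕ → Set Y, (∀ m, ∃ b, b < a ∧ g m ∈ FBorel Y b) ∧ A n = ⋃ m, g m :=
    fun n => (mem_FBorel_odd h0 he).1 (hA n)
  choose g hg1 hg2 using key
  have : (⋃ n, A n) = ⋃ p : ℕ, g (Nat.unpair p).1 (Nat.unpair p).2 := by
    rw [iUnion_pair_eq]
    exact Set.iUnion_congr hg2
  rw [this]
  exact FBorel_iUnion_of_lt h0 he fun p => hg1 _ _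

theorem FBorel_iUnion_le_of_odd {a : Ordinal.{0}} (ho : OddOrd a) {A : ℕ → Set Y}
    {b : ℕ → Ordinal.{0}} (hb : ∀ n, b n ≤ a) (hA : ∀ n, A n ∈ FBorel Y (b n)) :
    (⋃ n, A n) ∈ FBorel Y a :=
  FBorel_iUnion_of_odd ho fun n => FBorel_mono_le (hb n) (hA n)

/-- The `F`-Borel classes are closed under binary (hence finite) intersections. -/
theorem FBorel_inter : ∀ a : Ordinal.{0}, ∀ b ≤ a, ∀ A B : Set Y,
    A ∈ FBorel Y a → B ∈ FBorel Y b → A ∩ B ∈ FBorel Y a := by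
  intro a
  induction a using Ordinal.induction with
  | _ a IH =>
    intro b hba A B hA hB
    by_cases h0 : a = 0
    · subst h0
      have hb0 : b = 0 := le_antisymm hba zero_le
      subst hb0
      exact mem_FBorel_zero.2 ((mem_FBorel_zero.1 hA).inter (mem_FBorel_zero.1 hB))
    have aux : ∀ c d : Ordinal.{0}, c < a → d < a → ∀ S T : Set Y,
        S ∈ FBorel Y c → T ∈ FBorel Y d → ∃ e, e < a ∧ S ∩ T ∈ FBorel Y e := by
      intro c d hc hd S T hS hT
      rcases le_total d c with h | h
      · exact ⟨c, hc, IH c hc d h S T hS hT⟩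
      · exact ⟨d, hd, by rw [Set.inter_comm]; exact IH d hd c h T S hT hS⟩
    rcases evenOrd_or_oddOrd a with he | ho
    · rcases (mem_FBorel_even h0 he).1 hA with ⟨f, hf, rfl⟩
      rcases lt_or_eq_of_le hba with hlt | rfl
      · have : (⋂ n, f n) ∩ B = ⋂ n, (f n ∩ B) := by
          rw [Set.iInter_inter_distrib, Set.iInter_const]
        rw [this]
        refine FBorel_iInter_of_lt h0 he fun n => ?_
        rcases hf n with ⟨c, hc, hfc⟩
        exact aux c b hc hlt _ _ hfc hB
      · rcases (mem_FBorel_even h0 he).1 hB with ⟨g, hg, rfl⟩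
        have : (⋂ n, f n) ∩ ⋂ n, g n = ⋂ n, (f n ∩ g n) := by
          rw [Set.iInter_inter_distrib]
        rw [this]
        refine FBorel_iInter_of_lt h0 he fun n => ?_
        rcases hf n with ⟨c, hc, hfc⟩
        rcases hg n with ⟨d, hd, hgd⟩
        exact aux c d hc hd _ _ hfc hgd
    · have he : ¬ EvenOrd a := not_evenOrd_iff.2 ho
      rcases (mem_FBorel_odd h0 he).1 hA with ⟨f, hf, rfl⟩
      rcases lt_or_eq_of_le hba with hlt | rfl
      · have : (⋃ n, f n) ∩ B = ⋃ n, (f n ∩ B) := Set.iUnion_inter B f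
        rw [this]
        refine FBorel_iUnion_of_lt h0 he fun n => ?_
        rcases hf n with ⟨c, hc, hfc⟩
        exact aux c b hc hlt _ _ hfc hB
      · rcases (mem_FBorel_odd h0 he).1 hB with ⟨g, hg, rfl⟩
        have : (⋃ n, f n) ∩ ⋃ n, g n = ⋃ p : ℕ,
            (f (Nat.unpair p).1 ∩ g (Nat.unpair p).2) := by
          ext x
          simp only [Set.mem_inter_iff, Set.mem_iUnion]
          constructor
          · rintro ⟨⟨n, hn⟩, ⟨m, hm⟩⟩
            exact ⟨Nat.pair n m, by rw [Nat.unpair_pair]; exact ⟨hn, hm⟩⟩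
          · rintro ⟨p, hp1, hp2⟩
            exact ⟨⟨_, hp1⟩, ⟨_, hp2⟩⟩
        rw [this]
        refine FBorel_iUnion_of_lt h0 he fun p => ?_
        rcases hf (Nat.unpair p).1 with ⟨c, hc, hfc⟩
        rcases hg (Nat.unpair p).2 with ⟨d, hd, hgd⟩
        exact aux c d hc hd _ _ hfc hgd

theorem FBorel_inter' {a b : Ordinal.{0}} {A B : Set Y} (hA : A ∈ FBorel Y a)
    (hB : B ∈ FBorel Y b) : ∃ c, c ≤ max a b ∧ A ∩ B ∈ FBorel Y c := by
  rcases le_total b a with h | h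
  · exact ⟨a, le_max_left a b, FBorel_inter a b h A B hA hB⟩
  · exact ⟨b, le_max_right a b, by rw [Set.inter_comm]; exact FBorel_inter b a h B A hB hA⟩

/-! #### Preimages and images -/

theorem FBorel_preimage {X : Type u} [TopologicalSpace X] {g : X → Y} (hg : Continuous g) :
    ∀ a : Ordinal.{0}, ∀ A : Set Y, A ∈ FBorel Y a → g ⁻¹' A ∈ FBorel X a := by
  intro a
  induction a using Ordinal.induction with
  | _ a IH =>
    intro A hA
    by_cases h0 : a = 0
    · subst h0
      exact mem_FBorel_zero.2 ((mem_FBorel_zero.1 hA).preimage hg)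
    rcases evenOrd_or_oddOrd a with he | ho
    · rcases (mem_FBorel_even h0 he).1 hA with ⟨f, hf, rfl⟩
      rw [Set.preimage_iInter]
      refine FBorel_iInter_of_lt h0 he fun n => ?_
      rcases hf n with ⟨b, hb, hfb⟩
      exact ⟨b, hb, IH b hb _ hfb⟩
    · have he : ¬ EvenOrd a := not_evenOrd_iff.2 ho
      rcases (mem_FBorel_odd h0 he).1 hA with ⟨f, hf, rfl⟩
      rw [Set.preimage_iUnion]
      refine FBorel_iUnion_of_lt h0 he fun n => ?_
      rcases hf n with ⟨b, hb, hfb⟩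
      exact ⟨b, hb, IH b hb _ hfb⟩

theorem FBorel_image {X : Type u} [TopologicalSpace X] {g : X → Y}
    (hg : IsClosedEmbedding g) :
    ∀ a : Ordinal.{0}, ∀ A : Set X, A ∈ FBorel X a → g '' A ∈ FBorel Y a := by
  intro a
  induction a using Ordinal.induction with
  | _ a IH =>
    intro A hA
    by_cases h0 : a = 0
    · subst h0
      exact mem_FBorel_zero.2 (hg.isClosedMap A (mem_FBorel_zero.1 hA))
    rcases evenOrd_or_oddOrd a with he | ho
    · rcases (mem_FBorel_even h0 he).1 hA with ⟨f, hf, rfl⟩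
      rw [hg.injective.injOn.image_iInter_eq]
      refine FBorel_iInter_of_lt h0 he fun n => ?_
      rcases hf n with ⟨b, hb, hfb⟩
      exact ⟨b, hb, IH b hb _ hfb⟩
    · have he : ¬ EvenOrd a := not_evenOrd_iff.2 ho
      rcases (mem_FBorel_odd h0 he).1 hA with ⟨f, hf, rfl⟩
      rw [Set.image_iUnion]
      refine FBorel_iUnion_of_lt h0 he fun n => ?_
      rcases hf n with ⟨b, hb, hfb⟩
      exact ⟨b, hb, IH b hb _ hfb⟩

/-! #### Finite prefixes -/

theorem seqPrefix_zero (σ : ℕ → ℕ) : seqPrefix σ 0 = [] := rfl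

theorem seqPrefix_length (σ : ℕ → ℕ) (k : ℕ) : (seqPrefix σ k).length = k := by
  simp [seqPrefix]

theorem seqPrefix_succ (σ : ℕ → ℕ) (k : ℕ) :
    seqPrefix σ (k + 1) = seqPrefix σ k ++ [σ k] := by
  unfold seqPrefix
  rw [List.ofFn_succ']
  simp [List.concat_eq_append]

theorem seqPrefix_succ' (σ : ℕ → ℕ) (k : ℕ) :
    seqPrefix σ (k + 1) = σ 0 :: seqPrefix (fun i => σ (i + 1)) k := by
  unfold seqPrefix
  rw [List.ofFn_succ]
  simp

theorem seqPrefix_prefix_of_le (σ : ℕ → ℕ) {j k : ℕ} (h : j ≤ k) :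
    seqPrefix σ j <+: seqPrefix σ k := by
  induction k with
  | zero => rw [Nat.le_zero.1 h]
  | succ k ih =>
    rcases Nat.lt_or_ge j (k + 1) with h' | h'
    · exact (ih (Nat.lt_succ_iff.1 h')).trans ⟨[σ k], (seqPrefix_succ σ k).symm⟩
    · rw [le_antisymm h h']

theorem eq_seqPrefix_of_prefix {σ : ℕ → ℕ} {k : ℕ} {t : List ℕ}
    (h : t <+: seqPrefix σ k) : t = seqPrefix σ t.length := by
  induction k with
  | zero =>
    have ht : t = [] := List.prefix_nil.1 h
    subst ht; rfl
  | succ k ih =>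
    rcases Nat.lt_or_ge t.length (k + 1) with h' | h'
    · apply ih
      have hlen : t.length ≤ k := Nat.lt_succ_iff.1 h'
      have := List.prefix_iff_eq_take.1 h
      rw [seqPrefix_succ, List.take_append_of_le_length
        (by rw [seqPrefix_length]; exact hlen)] at this
      rw [this]
      exact List.take_prefix _ _
    · have hlen : t.length = k + 1 := le_antisymm
        (by simpa [seqPrefix_length] using h.length_le) h'
      have : t = seqPrefix σ (k + 1) := List.IsPrefix.eq_of_length h
        (by rw [hlen, seqPrefix_length])
      rw [this, seqPrefix_length]

/-! #### Basic properties of Suslin-F sets -/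

theorem suslin_inter_closed {S L : Set Y} (hS : S ∈ SuslinF Y) (hL : IsClosed L) :
    S ∩ L ∈ SuslinF Y := by
  rcases hS with ⟨C, hC, rfl⟩
  refine ⟨fun s => C s ∩ L, fun s => (hC s).inter hL, ?_⟩
  unfold suslinOp
  ext x
  simp only [Set.mem_inter_iff, Set.mem_iUnion, Set.mem_iInter]
  constructor
  · rintro ⟨⟨σ, hσ⟩, hx⟩
    exact ⟨σ, fun k => ⟨hσ k, hx⟩⟩
  · rintro ⟨σ, hσ⟩
    exact ⟨⟨σ, fun k => (hσ k).1⟩, (hσ 0).2⟩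

theorem suslin_preimage {X : Type u} [TopologicalSpace X] {g : X → Y}
    (hg : Continuous g) {S : Set Y} (hS : S ∈ SuslinF Y) : g ⁻¹' S ∈ SuslinF X := by
  rcases hS with ⟨C, hC, rfl⟩
  refine ⟨fun s => g ⁻¹' (C s), fun s => (hC s).preimage hg, ?_⟩
  unfold suslinOp
  rw [Set.preimage_iUnion]
  exact Set.iUnion_congr fun σ => by rw [Set.preimage_iInter]

theorem suslin_image {X : Type u} [TopologicalSpace X] {g : X → Y}
    (hg : IsClosedEmbedding g) {S : Set X} (hS : S ∈ SuslinF X) : g '' S ∈ SuslinF Y := by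
  rcases hS with ⟨C, hC, rfl⟩
  refine ⟨fun s => g '' (C s), fun s => hg.isClosedMap _ (hC s), ?_⟩
  unfold suslinOp
  rw [Set.image_iUnion]
  exact Set.iUnion_congr fun σ => by rw [hg.injective.injOn.image_iInter_eq]

theorem suslin_iUnion {S : ℕ → Set Y} (hS : ∀ k, S k ∈ SuslinF Y) :
    (⋃ k, S k) ∈ SuslinF Y := by
  choose C hCcl hCeq using hS
  classical
  refine ⟨fun s => match s with | [] => Set.univ | n :: t => C n t,
    fun s => by cases s with | nil => exact isClosed_univ | cons n t => exact hCcl n t, ?_⟩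
  apply Set.Subset.antisymm
  · rintro x hx
    obtain ⟨k, hk⟩ := Set.mem_iUnion.1 hx
    rw [hCeq k] at hk
    rcases Set.mem_iUnion.1 hk with ⟨τ, hτ⟩
    refine Set.mem_iUnion.2 ⟨fun i => match i with | 0 => k | (i + 1) => τ i, ?_⟩
    refine Set.mem_iInter.2 fun m => ?_
    match m with
    | 0 => rw [seqPrefix_zero]; exact Set.mem_univ x
    | (m + 1) =>
      rw [seqPrefix_succ']
      exact Set.mem_iInter.1 hτ m
  · rintro x hx
    rcases Set.mem_iUnion.1 hx with ⟨σ, hσ⟩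
    refine Set.mem_iUnion.2 ⟨σ 0, ?_⟩
    rw [hCeq (σ 0)]
    refine Set.mem_iUnion.2 ⟨fun i => σ (i + 1), Set.mem_iInter.2 fun m => ?_⟩
    have := Set.mem_iInter.1 hσ (m + 1)
    rw [seqPrefix_succ'] at this
    exact this

/-- Any Suslin-F subset of a compact space contained in an open set `U` can be enlarged
to an `F_σ` set still contained in `U`. -/
theorem suslin_separation [CompactSpace Y] {S U : Set Y} (hS : S ∈ SuslinF Y)
    (hU : IsOpen U) (hSU : S ⊆ U) : ∃ P, P ∈ FBorel Y 1 ∧ S ⊆ P ∧ P ⊆ U := by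
  classical
  rcases hS with ⟨C, hCcl, rfl⟩
  set C' : List ℕ → Set Y := fun s => ⋂ t : List ℕ, ⋂ _ : t <+: s, C t with hC'def
  have hC'cl : ∀ s, IsClosed (C' s) :=
    fun s => isClosed_iInter fun t => isClosed_iInter fun _ => hCcl t
  have hC'sub : ∀ s, C' s ⊆ C s := fun s x hx => Set.mem_iInter₂.1 hx s (List.prefix_refl s)
  have hmono : ∀ (σ : ℕ → ℕ) {j k : ℕ}, j ≤ k →
      C' (seqPrefix σ k) ⊆ C' (seqPrefix σ j) := by
    intro σ j k hjk x hx
    refine Set.mem_iInter₂.2 fun t ht => ?_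
    exact Set.mem_iInter₂.1 hx t (ht.trans (seqPrefix_prefix_of_le σ hjk))
  have hC'mem : ∀ (σ : ℕ → ℕ) (x : Y), (∀ m, x ∈ C (seqPrefix σ m)) →
      ∀ k, x ∈ C' (seqPrefix σ k) := by
    intro σ x hx k
    refine Set.mem_iInter₂.2 fun t ht => ?_
    rw [eq_seqPrefix_of_prefix ht]
    exact hx t.length
  set P : Set Y := ⋃ s : List ℕ, (if C' s ⊆ U then C' s else ∅) with hPdef
  refine ⟨P, ?_, ?_, ?_⟩
  · have hsurj : Function.Surjective ((Denumerable.eqv (List ℕ)).symm : ℕ → List ℕ) :=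
      (Denumerable.eqv (List ℕ)).symm.surjective
    have : P = ⋃ n : ℕ, (if C' ((Denumerable.eqv (List ℕ)).symm n) ⊆ U
        then C' ((Denumerable.eqv (List ℕ)).symm n) else ∅) :=
      (hsurj.iUnion_comp fun s => (if C' s ⊆ U then C' s else ∅)).symm
    rw [this]
    refine (mem_FBorel_odd one_ne_zero (not_evenOrd_iff.2 oddOrd_one)).2
      ⟨fun n => (if C' ((Denumerable.eqv (List ℕ)).symm n) ⊆ U
          then C' ((Denumerable.eqv (List ℕ)).symm n) else ∅),
        fun n => ⟨(0 : Ordinal.{0}), zero_lt_one, mem_FBorel_zero.2 (by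
          beta_reduce
          by_cases h : C' ((Denumerable.eqv (List ℕ)).symm n) ⊆ U
          · rw [if_pos h]; exact hC'cl _
          · rw [if_neg h]; exact isClosed_empty)⟩, rfl⟩
  · intro x hx
    rcases Set.mem_iUnion.1 hx with ⟨σ, hσ⟩
    have hσ' : ∀ m, x ∈ C (seqPrefix σ m) := fun m => Set.mem_iInter.1 hσ m
    have hsub : ⋂ k, (C' (seqPrefix σ k) ∩ Uᶜ) = ∅ := by
      rw [Set.eq_empty_iff_forall_notMem]
      intro y hy
      have hy1 : ∀ k, y ∈ C (seqPrefix σ k) :=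
        fun k => hC'sub _ (Set.mem_iInter.1 hy k).1
      have hy2 : y ∈ Uᶜ := (Set.mem_iInter.1 hy 0).2
      exact hy2 (hSU (Set.mem_iUnion.2 ⟨σ, Set.mem_iInter.2 hy1⟩))
    have : ∃ k, C' (seqPrefix σ k) ∩ Uᶜ = ∅ := by
      by_contra hne
      push_neg at hne
      have hne' : ∀ k, (C' (seqPrefix σ k) ∩ Uᶜ).Nonempty := hne
      have hdir : Directed (fun x1 x2 : Set Y => x1 ⊇ x2)
          (fun k => C' (seqPrefix σ k) ∩ Uᶜ) := fun i j =>
        ⟨max i j, Set.inter_subset_inter_left _ (hmono σ (le_max_left i j)),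
          Set.inter_subset_inter_left _ (hmono σ (le_max_right i j))⟩
      have hcl : ∀ k, IsClosed (C' (seqPrefix σ k) ∩ Uᶜ) :=
        fun k => (hC'cl _).inter (isClosed_compl_iff.2 hU)
      have := IsCompact.nonempty_iInter_of_directed_nonempty_isCompact_isClosed
        _ hdir hne' (fun k => (hcl k).isCompact) hcl
      rw [hsub] at this
      exact Set.not_nonempty_empty this
    rcases this with ⟨k, hk⟩
    have hCU : C' (seqPrefix σ k) ⊆ U := by
      intro y hy
      by_contra hyU
      exact Set.eq_empty_iff_forall_notMem.1 hk y ⟨hy, hyU⟩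
    refine Set.mem_iUnion.2 ⟨seqPrefix σ k, ?_⟩
    rw [if_pos hCU]
    exact hC'mem σ x hσ' k
  · refine Set.iUnion_subset fun s => ?_
    by_cases h : C' s ⊆ U
    · rw [if_pos h]; exact h
    · rw [if_neg h]; exact Set.empty_subset U

/-- **Core union lemma.** A countable union of sets `R k` of classes `b k ≤ α` which are
separated by pairwise disjoint `F_σ` sets `P k` belongs to the class `α`, for any
`α ≥ 1`. -/
theorem union_mem_FBorel {R P : ℕ → Set Y} {b : ℕ → Ordinal.{0}} {α : Ordinal.{0}}
    (h1 : 1 ≤ α) (hbα : ∀ k, b k ≤ α) (hR : ∀ k, R k ∈ FBorel Y (b k))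
    (hP : ∀ k, P k ∈ FBorel Y 1) (hRP : ∀ k, R k ⊆ P k)
    (hdisj : ∀ j k, j ≠ k → P j ∩ P k = ∅) :
    (⋃ k, R k) ∈ FBorel Y α := by
  classical
  rcases evenOrd_or_oddOrd α with he | ho
  swap
  · exact FBorel_iUnion_le_of_odd ho hbα hR
  have h0 : α ≠ 0 := by
    rintro rfl
    exact one_ne_zero (nonpos_iff_eq_zero.1 h1)
  have h1lt : 1 < α := one_lt_of_evenOrd he h0
  have key : ∀ k, ∃ g : ℕ → Set Y,
      (∀ m, ∃ c, c < α ∧ g m ∈ FBorel Y c) ∧ ⋂ m, g m = R k := by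
    intro k
    rcases lt_or_eq_of_le (hbα k) with h | h
    · exact ⟨fun _ => R k, fun m => ⟨b k, h, hR k⟩, Set.iInter_const _⟩
    · rcases (mem_FBorel_even h0 he).1 (h ▸ hR k) with ⟨g, hg, hEq⟩
      exact ⟨g, hg, hEq.symm⟩
  choose g hg hgEq using key
  set SS : ℕ → ℕ → Set Y :=
    fun k => Nat.rec (P k ∩ g k 0) (fun m ih => ih ∩ g k (m + 1)) with hSSdef
  have hSS0 : ∀ k, SS k 0 = P k ∩ g k 0 := fun k => rfl
  have hSSsucc : ∀ k m, SS k (m + 1) = SS k m ∩ g k (m + 1) := fun k m => rfl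
  have hSSP : ∀ k m, SS k m ⊆ P k := by
    intro k m
    induction m with
    | zero => exact Set.inter_subset_left
    | succ m ih => exact Set.inter_subset_left.trans ih
  have hSSanti : ∀ k, ∀ {m m' : ℕ}, m ≤ m' → SS k m' ⊆ SS k m := by
    intro k m m' h
    induction m' with
    | zero => rw [Nat.le_zero.1 h]
    | succ m' ih =>
      rcases Nat.lt_or_ge m (m' + 1) with h' | h'
      · exact Set.inter_subset_left.trans (ih (Nat.lt_succ_iff.1 h'))
      · rw [le_antisymm h h']
  have hSSsubg : ∀ k m i, i ≤ m → SS k m ⊆ g k i := by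
    intro k m
    induction m with
    | zero =>
      intro i hi
      rw [Nat.le_zero.1 hi]
      exact Set.inter_subset_right
    | succ m ih =>
      intro i hi
      rcases Nat.lt_or_ge i (m + 1) with h' | h'
      · exact Set.inter_subset_left.trans (ih i (Nat.lt_succ_iff.1 h'))
      · rw [le_antisymm hi h']
        exact Set.inter_subset_right
  have hSSint : ∀ k, ⋂ m, SS k m = R k := by
    intro k
    apply Set.Subset.antisymm
    · intro x hx
      have : ∀ i, x ∈ g k i := fun i => hSSsubg k i i (le_refl i) (Set.mem_iInter.1 hx i)
      rw [← hgEq k]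
      exact Set.mem_iInter.2 this
    · intro x hx
      have hxg : ∀ i, x ∈ g k i := fun i =>
        Set.mem_iInter.1 (by rw [hgEq k]; exact hx) i
      refine Set.mem_iInter.2 fun m => ?_
      induction m with
      | zero => exact ⟨hRP k hx, hxg 0⟩
      | succ m ih => exact ⟨ih, hxg (m + 1)⟩
  have hSSmem : ∀ k m, ∃ c, c < α ∧ SS k m ∈ FBorel Y c := by
    intro k m
    induction m with
    | zero =>
      obtain ⟨c, hc, hgc⟩ := hg k 0
      obtain ⟨e, hele, hemem⟩ := FBorel_inter' (hP k) hgc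
      exact ⟨e, lt_of_le_of_lt hele (max_lt h1lt hc), hemem⟩
    | succ m ih =>
      obtain ⟨d, hd, hSSd⟩ := ih
      obtain ⟨c, hc, hgc⟩ := hg k (m + 1)
      obtain ⟨e, hele, hemem⟩ := FBorel_inter' hSSd hgc
      exact ⟨e, lt_of_le_of_lt hele (max_lt hd hc), hemem⟩
  choose c hcα hcmem using hSSmem
  have hW : ∀ m, ∃ δ, δ < α ∧ (⋃ k, (if k ≤ m then SS k m else P k)) ∈ FBorel Y δ := by
    intro m
    have hβ : max 1 ((Finset.range (m + 1)).sup (fun j => c j m)) < α := by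
      refine max_lt h1lt ?_
      refine (Finset.sup_lt_iff ?_).2 fun j _ => hcα j m
      rw [Ordinal.bot_eq_zero]
      exact pos_iff_ne_zero.2 h0
    obtain ⟨δ, hδodd, hβδ, hδα⟩ := exists_odd_btwn he h0 hβ
    refine ⟨δ, hδα, FBorel_iUnion_of_odd hδodd fun k => ?_⟩
    by_cases hk : k ≤ m
    · rw [if_pos hk]
      refine FBorel_mono_le ?_ (hcmem k m)
      calc c k m ≤ (Finset.range (m + 1)).sup (fun j => c j m) :=
            Finset.le_sup (f := fun j => c j m) (Finset.mem_range.2 (Nat.lt_succ_of_le hk))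
        _ ≤ max 1 ((Finset.range (m + 1)).sup (fun j => c j m)) := le_max_right _ _
        _ ≤ δ := hβδ
    · rw [if_neg hk]
      exact FBorel_mono_le ((le_max_left 1 _).trans hβδ) (hP k)
  choose δ hδα hWmem using hW
  have hEq : (⋃ k, R k) = ⋂ m, (⋃ k, (if k ≤ m then SS k m else P k)) := by
    apply Set.Subset.antisymm
    · refine Set.iUnion_subset fun k x hx => Set.mem_iInter.2 fun m => ?_
      refine Set.mem_iUnion.2 ⟨k, ?_⟩
      by_cases hk : k ≤ m
      · rw [if_pos hk]
        have : x ∈ ⋂ m, SS k m := by rw [hSSint k]; exact hx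
        exact Set.mem_iInter.1 this m
      · rw [if_neg hk]
        exact hRP k hx
    · intro x hx
      obtain ⟨k0, hk0⟩ := Set.mem_iUnion.1 (Set.mem_iInter.1 hx 0)
      have hxP0 : x ∈ P k0 := by
        by_cases h : k0 ≤ 0
        · rw [if_pos h] at hk0; exact hSSP k0 0 hk0
        · rw [if_neg h] at hk0; exact hk0
      have hsame : ∀ m k, x ∈ (if k ≤ m then SS k m else P k) → k = k0 := by
        intro m k hxk
        by_contra hne
        have hxPk : x ∈ P k := by
          by_cases h : k ≤ m
          · rw [if_pos h] at hxk; exact hSSP k m hxk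
          · rw [if_neg h] at hxk; exact hxk
        exact Set.eq_empty_iff_forall_notMem.1 (hdisj k k0 hne) x ⟨hxPk, hxP0⟩
      have hxSS : ∀ m, x ∈ SS k0 m := by
        intro m
        obtain ⟨k, hk⟩ := Set.mem_iUnion.1 (Set.mem_iInter.1 hx (max m k0))
        have hkk0 := hsame _ _ hk
        subst hkk0
        rw [if_pos (le_max_right m k)] at hk
        exact hSSanti k (le_max_left m k) hk
      refine Set.mem_iUnion.2 ⟨k0, ?_⟩
      rw [← hSSint k0]
      exact Set.mem_iInter.2 hxSS
  rw [hEq]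
  exact FBorel_iInter_of_lt h0 he fun m => ⟨δ m, hδα m, hWmem m⟩

/-! #### Complexity in a space -/

/-- The set of ordinals `a ≤ ω₁` such that `X ∈ F_a(Y)`. -/
def cplSet (Y : Type u) [TopologicalSpace Y] (X : Set Y) : Set Ordinal.{0} :=
  { a : Ordinal.{0} | a ≤ omega1 ∧ X ∈ FClass Y a }

theorem complIn_eq_sInf {X : Set Y} : ComplIn Y X = sInf (cplSet Y X) := rfl

theorem omega1_pos : (0 : Ordinal.{0}) < omega1 :=
  lt_of_lt_of_le Ordinal.omega0_pos (Ordinal.omega0_le_omega 1)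

theorem mem_cplSet_omega1 {X : Set Y} (h : X ∈ SuslinF Y) : omega1 ∈ cplSet Y X :=
  ⟨le_refl _, by unfold FClass; rw [if_neg (lt_irrefl omega1)]; exact h⟩

theorem mem_cplSet_of_lt {X : Set Y} {a : Ordinal.{0}} (ha : a < omega1)
    (h : X ∈ FBorel Y a) : a ∈ cplSet Y X :=
  ⟨le_of_lt ha, by unfold FClass; rw [if_pos ha]; exact h⟩

theorem cplSet_fborel {X : Set Y} {a : Ordinal.{0}} (ha : a < omega1)
    (h : a ∈ cplSet Y X) : X ∈ FBorel Y a := by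
  have := h.2
  unfold FClass at this
  rwa [if_pos ha] at this

theorem complIn_le {X : Set Y} {a : Ordinal.{0}} (h : a ∈ cplSet Y X) :
    ComplIn Y X ≤ a := csInf_le' h

theorem complIn_mem {X : Set Y} (h : X ∈ SuslinF Y) : ComplIn Y X ∈ cplSet Y X :=
  csInf_mem ⟨_, mem_cplSet_omega1 h⟩

theorem complIn_le_omega1 {X : Set Y} (h : X ∈ SuslinF Y) : ComplIn Y X ≤ omega1 :=
  complIn_le (mem_cplSet_omega1 h)

theorem le_complIn {X : Set Y} {a : Ordinal.{0}} (hne : (cplSet Y X).Nonempty)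
    (h : ∀ b ∈ cplSet Y X, a ≤ b) : a ≤ ComplIn Y X := le_csInf hne h

/-! #### Compactification utilities -/

theorem denseRange_into_closure {Z : Type v} {X : Type u} [TopologicalSpace X]
    (f : Z → X) (h : ∀ z, f z ∈ closure (Set.range f)) :
    DenseRange (Set.codRestrict f (closure (Set.range f)) h) := by
  rw [DenseRange, dense_iff_closure_eq]
  have hval : Subtype.val '' (Set.range (Set.codRestrict f (closure (Set.range f)) h)) =
      Set.range f := by
    ext x
    constructor
    · rintro ⟨q, ⟨z, rfl⟩, rfl⟩
      exact ⟨z, rfl⟩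
    · rintro ⟨z, rfl⟩
      exact ⟨Set.codRestrict f _ h z, ⟨z, rfl⟩, rfl⟩
  rw [IsInducing.subtypeVal.closure_eq_preimage_closure_image, hval]
  ext q
  simp only [Set.mem_preimage, Set.mem_univ, iff_true]
  exact q.2

theorem one_le_complIn_of_noncompact {X : Type u} [TopologicalSpace X] {K : Type u}
    [TopologicalSpace K] {e : X → K} (hc : IsCompactification X K e)
    (hS : Set.range e ∈ SuslinF K) (hnc : ¬ CompactSpace X) :
    1 ≤ ComplIn K (Set.range e) := by
  obtain ⟨hcK, ht2, hemb, hdense⟩ := hc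
  by_contra h
  push_neg at h
  have h0 : ComplIn K (Set.range e) = 0 := Ordinal.lt_one_iff_zero.1 h
  have hmem := complIn_mem hS
  rw [h0] at hmem
  have hcl : IsClosed (Set.range e) := mem_FBorel_zero.1 (cplSet_fborel omega1_pos hmem)
  haveI := hcK
  exact hnc (IsClosedEmbedding.mk hemb hcl).compactSpace

/-- **Construction direction.** Given attained complexities `f k` of the spaces `X k`,
the supremum `⨆ k, f k` is attained by the topological sum. -/
theorem iSup_mem_attainedCompl_sigma (X : ℕ → Type u) [∀ k, TopologicalSpace (X k)]
    (hnc : ∃ k, ¬ CompactSpace (X k)) {f : ℕ → Ordinal.{0}}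
    (hf : ∀ k, f k ∈ AttainedCompl (X k)) :
    (⨆ k, f k) ∈ AttainedCompl ((k : ℕ) × X k) := by
  classical
  obtain ⟨k₀, hk₀⟩ := hnc
  choose K tK e hcomp hSus hval using hf
  letI : ∀ k, TopologicalSpace (K k) := tK
  haveI hcpt : ∀ k, CompactSpace (K k) := fun k => (hcomp k).1
  haveI ht2 : ∀ k, T2Space (K k) := fun k => (hcomp k).2.1
  haveI : WeaklyLocallyCompactSpace ((k : ℕ) × K k) := by
    refine ⟨fun p => ?_⟩
    obtain ⟨k, y⟩ := p
    exact ⟨Set.range (Sigma.mk k), isCompact_range continuous_sigmaMk,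
      IsOpenEmbedding.sigmaMk.isOpen_range.mem_nhds ⟨y, rfl⟩⟩
  set E0 : ((k : ℕ) × X k) → OnePoint ((k : ℕ) × K k) :=
    fun p => OnePoint.some ⟨p.1, e p.1 p.2⟩ with hE0def
  have hE0 : IsEmbedding E0 := by
    have h1 : IsEmbedding (Sigma.map id (fun k => e k) : ((k : ℕ) × X k) → (k : ℕ) × K k) :=
      (isEmbedding_sigmaMap Function.injective_id).2 fun k => (hcomp k).2.2.1
    have h2 : IsEmbedding (OnePoint.some : ((k : ℕ) × K k) → OnePoint ((k : ℕ) × K k)) :=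
      OnePoint.isOpenEmbedding_coe.isEmbedding
    have hcomp' : E0 = OnePoint.some ∘ Sigma.map id (fun k => e k) := by
      funext p; cases p; rfl
    rw [hcomp']
    exact h2.comp h1
  set C0 : Set (OnePoint ((k : ℕ) × K k)) := closure (Set.range E0) with hC0def
  haveI : CompactSpace (↥C0) := isCompact_iff_compactSpace.1 (isClosed_closure.isCompact)
  set E : ((k : ℕ) × X k) → ↥C0 :=
    Set.codRestrict E0 C0 (fun p => subset_closure ⟨p, rfl⟩) with hEdef
  have hE : IsEmbedding E := hE0.codRestrict _ _
  have hEd : DenseRange E := denseRange_into_closure E0 _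
  have hsubK : ∀ (k : ℕ) (y : K k), (OnePoint.some ⟨k, y⟩ : OnePoint ((k : ℕ) × K k)) ∈ C0 := by
    intro k y
    have hyd : y ∈ closure (Set.range (e k)) := (hcomp k).2.2.2 y
    have hcont : Continuous (fun y : K k =>
        (OnePoint.some ⟨k, y⟩ : OnePoint ((k : ℕ) × K k))) :=
      OnePoint.continuous_coe.comp continuous_sigmaMk
    have hmem : (OnePoint.some ⟨k, y⟩ : OnePoint ((k : ℕ) × K k)) ∈
        (fun y : K k => (OnePoint.some ⟨k, y⟩ : OnePoint ((k : ℕ) × K k))) ''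
          closure (Set.range (e k)) := ⟨y, hyd, rfl⟩
    have himg : (fun y : K k => (OnePoint.some ⟨k, y⟩ : OnePoint ((k : ℕ) × K k))) ''
        (Set.range (e k)) ⊆ Set.range E0 := by
      rintro _ ⟨_, ⟨x, rfl⟩, rfl⟩
      exact ⟨⟨k, x⟩, rfl⟩
    exact closure_mono himg (image_closure_subset_closure_image hcont hmem)
  set g : ∀ k, K k → ↥C0 :=
    fun k => Set.codRestrict (fun y => OnePoint.some ⟨k, y⟩) C0 (hsubK k) with hgdef
  have hgc : ∀ k, Continuous (g k) :=
    fun k => (OnePoint.continuous_coe.comp continuous_sigmaMk).codRestrict _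
  have hgi : ∀ k, Function.Injective (g k) := by
    intro k y y' h
    have h' := congrArg Subtype.val h
    change (OnePoint.some ⟨k, y⟩ : OnePoint ((i : ℕ) × K i)) = OnePoint.some ⟨k, y'⟩ at h'
    exact sigma_mk_injective (OnePoint.coe_injective h')
  have hgemb : ∀ k, IsClosedEmbedding (g k) := fun k => (hgc k).isClosedEmbedding (hgi k)
  have hrangeE : Set.range E = ⋃ k, (g k '' Set.range (e k)) := by
    ext q
    simp only [Set.mem_range, Set.mem_iUnion, Set.mem_image]
    constructor
    · rintro ⟨⟨k, x⟩, rfl⟩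
      exact ⟨k, e k x, ⟨x, rfl⟩, by apply Subtype.ext; rfl⟩
    · rintro ⟨k, y, ⟨x, rfl⟩, rfl⟩
      exact ⟨⟨k, x⟩, by apply Subtype.ext; rfl⟩
  have hPdisj : ∀ j k, j ≠ k → Set.range (g j) ∩ Set.range (g k) = ∅ := by
    intro j k hjk
    rw [Set.eq_empty_iff_forall_notMem]
    rintro q ⟨⟨y, rfl⟩, ⟨y', hy'⟩⟩
    have h' := congrArg Subtype.val hy'
    change (OnePoint.some ⟨k, y'⟩ : OnePoint ((i : ℕ) × K i)) = OnePoint.some ⟨j, y⟩ at h'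
    exact hjk ((Sigma.mk.inj_iff.1 (OnePoint.coe_injective h')).1).symm
  have hgpre : ∀ k, (g k) ⁻¹' (Set.range E) = Set.range (e k) := by
    intro k
    ext y
    simp only [Set.mem_preimage, Set.mem_range]
    constructor
    · rintro ⟨⟨j, x⟩, hp⟩
      have h' := congrArg Subtype.val hp
      change (OnePoint.some ⟨j, e j x⟩ : OnePoint ((i : ℕ) × K i)) = OnePoint.some ⟨k, y⟩ at h'
      obtain ⟨hjk, hyx⟩ := Sigma.mk.inj_iff.1 (OnePoint.coe_injective h')
      subst hjk
      exact ⟨x, eq_of_heq hyx⟩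
    · rintro ⟨x, rfl⟩
      exact ⟨⟨k, x⟩, by apply Subtype.ext; rfl⟩
  have hSusR : ∀ k, (g k '' Set.range (e k)) ∈ SuslinF (↥C0) :=
    fun k => suslin_image (hgemb k) (hSus k)
  have hSusE : Set.range E ∈ SuslinF (↥C0) := by
    rw [hrangeE]; exact suslin_iUnion hSusR
  have hfle : ∀ k, f k ≤ omega1 := fun k => by
    rw [hval k]; exact complIn_le_omega1 (hSus k)
  have hbdd : BddAbove (Set.range f) := ⟨omega1, by rintro _ ⟨k, rfl⟩; exact hfle k⟩
  have h1f : 1 ≤ f k₀ := by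
    rw [hval k₀]; exact one_le_complIn_of_noncompact (hcomp k₀) (hSus k₀) hk₀
  have h1γ : 1 ≤ ⨆ k, f k := le_trans h1f (le_ciSup hbdd k₀)
  have hγω : (⨆ k, f k) ≤ omega1 := ciSup_le hfle
  have hlow : ∀ β ∈ cplSet (↥C0) (Set.range E), ∀ k, f k ≤ β := by
    intro β hβ k
    rcases lt_or_ge β omega1 with hβω | hβω
    · have hFB : Set.range E ∈ FBorel (↥C0) β := cplSet_fborel hβω hβ
      have hpre := FBorel_preimage (hgc k) β _ hFB
      rw [hgpre k] at hpre
      rw [hval k]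
      exact complIn_le (mem_cplSet_of_lt hβω hpre)
    · exact le_trans (hfle k) hβω
  have hup : (⨆ k, f k) ∈ cplSet (↥C0) (Set.range E) := by
    rcases lt_or_ge (⨆ k, f k) omega1 with hγlt | hγge
    · refine mem_cplSet_of_lt hγlt ?_
      rw [hrangeE]
      refine union_mem_FBorel (b := f) h1γ (fun k => le_ciSup hbdd k) ?_ ?_ ?_ hPdisj
      · intro k
        have hmem := complIn_mem (hSus k)
        rw [← hval k] at hmem
        have hfk_lt : f k < omega1 := lt_of_le_of_lt (le_ciSup hbdd k) hγlt
        exact FBorel_image (hgemb k) _ _ (cplSet_fborel hfk_lt hmem)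
      · intro k
        exact FBorel_mono zero_lt_one (mem_FBorel_zero.2 (hgemb k).isClosed_range)
      · intro k
        exact Set.image_subset_range _ _
    · have hγeq : (⨆ k, f k) = omega1 := le_antisymm hγω hγge
      rw [hγeq]
      exact mem_cplSet_omega1 hSusE
  have hC : ComplIn (↥C0) (Set.range E) = ⨆ k, f k := by
    apply le_antisymm (complIn_le hup)
    exact le_complIn ⟨_, hup⟩ fun β hβ => ciSup_le fun k => hlow β hβ k
  exact ⟨↥C0, inferInstance, E, ⟨inferInstance, inferInstance, hE, hEd⟩, hSusE, hC.symm⟩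

/-- **Decomposition direction.** Any complexity attained by the topological sum is the
supremum of a selector of attained complexities of the summands. -/
theorem attainedCompl_sigma_subset (X : ℕ → Type u) [∀ k, TopologicalSpace (X k)]
    (hnc : ∃ k, ¬ CompactSpace (X k)) {γ : Ordinal.{0}}
    (hγ : γ ∈ AttainedCompl ((k : ℕ) × X k)) :
    ∃ f : ℕ → Ordinal.{0}, (∀ k, f k ∈ AttainedCompl (X k)) ∧ γ = ⨆ k, f k := by
  classical
  obtain ⟨Y, tY, E, hcomp, hSus, hγval⟩ := hγ
  letI := tY
  obtain ⟨hcY, ht2Y, hembE, hdenseE⟩ := hcomp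
  haveI := hcY; haveI := ht2Y
  obtain ⟨k₀, hk₀⟩ := hnc
  set A : ℕ → Set Y := fun k => Set.range (fun x : X k => E ⟨k, x⟩) with hAdef
  set Bc : ℕ → Set Y := fun k => E '' { p : (k' : ℕ) × X k' | p.1 ≠ k } with hBcdef
  set U : ℕ → Set Y := fun k => (closure (Bc k))ᶜ with hUdef
  have hUopen : ∀ k, IsOpen (U k) := fun k => isClosed_closure.isOpen_compl
  have hrangeE : Set.range E = ⋃ k, A k := by
    ext q; simp only [Set.mem_range, Set.mem_iUnion, hAdef]
    constructor
    · rintro ⟨⟨k, x⟩, rfl⟩; exact ⟨k, x, rfl⟩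
    · rintro ⟨k, x, rfl⟩; exact ⟨⟨k, x⟩, rfl⟩
  have hAU : ∀ k, A k ⊆ U k := by
    intro k
    rintro _ ⟨x, rfl⟩
    have hopen : IsOpen { p : (k' : ℕ) × X k' | p.1 = k } := by
      rw [isOpen_sigma_iff]
      intro j
      rcases eq_or_ne j k with rfl | hj
      · have : (Sigma.mk j ⁻¹' { p : (k' : ℕ) × X k' | p.1 = j }) = Set.univ := by
          ext x'; simp
        rw [this]; exact isOpen_univ
      · have : (Sigma.mk j ⁻¹' { p : (k' : ℕ) × X k' | p.1 = k }) = ∅ := by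
          ext x'; simp [hj]
        rw [this]; exact isOpen_empty
    obtain ⟨V, hVopen, hVpre⟩ := hembE.isInducing.isOpen_iff.1 hopen
    rw [hUdef]
    simp only [Set.mem_compl_iff]
    intro hcl
    have h1 : E ⟨k, x⟩ ∈ V := by
      have : (⟨k, x⟩ : (k' : ℕ) × X k') ∈ E ⁻¹' V := by rw [hVpre]; exact rfl
      exact this
    obtain ⟨q, hqV, hqB⟩ := mem_closure_iff.1 hcl V hVopen h1
    obtain ⟨p, hp1, rfl⟩ := hqB
    have : p ∈ E ⁻¹' V := hqV
    rw [hVpre] at this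
    exact hp1 this
  have hdisjU : ∀ j k, j ≠ k → U j ∩ U k = ∅ := by
    intro j k hjk
    by_contra hne
    have hopen : IsOpen (U j ∩ U k) := (hUopen j).inter (hUopen k)
    obtain ⟨q, ⟨hqj, hqk⟩, p, rfl⟩ :=
      hdenseE.inter_open_nonempty _ hopen (Set.nonempty_iff_ne_empty.2 hne)
    have h1 : p.1 = j := by
      by_contra h
      exact hqj (subset_closure ⟨p, h, rfl⟩)
    have h2 : p.1 = k := by
      by_contra h
      exact hqk (subset_closure ⟨p, h, rfl⟩)
    exact hjk (h1 ▸ h2)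
  have hAL : ∀ k, Set.range E ∩ closure (A k) = A k := by
    intro k
    apply Set.Subset.antisymm
    · rintro q ⟨⟨p, rfl⟩, hq⟩
      obtain ⟨j, xp⟩ := p
      rcases eq_or_ne j k with rfl | hp
      · exact ⟨xp, rfl⟩
      · exfalso
        have hq1 : E ⟨j, xp⟩ ∈ U j := hAU j ⟨xp, rfl⟩
        obtain ⟨r, hrU, hrA⟩ := mem_closure_iff.1 hq (U j) (hUopen j) hq1
        obtain ⟨x, rfl⟩ := hrA
        exact hrU (subset_closure ⟨⟨k, x⟩, fun hh => hp hh.symm, rfl⟩)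
    · intro q hq
      refine ⟨?_, subset_closure hq⟩
      rcases hq with ⟨x, rfl⟩
      exact ⟨⟨k, x⟩, rfl⟩
  haveI hLcpt : ∀ k, CompactSpace (↥(closure (A k))) :=
    fun k => isCompact_iff_compactSpace.1 (isClosed_closure.isCompact)
  set e' : ∀ k, X k → ↥(closure (A k)) := fun k =>
    Set.codRestrict (fun x : X k => E ⟨k, x⟩) (closure (A k))
      (fun x => subset_closure ⟨x, rfl⟩) with he'def
  have hembk : ∀ k, IsEmbedding (fun x : X k => E ⟨k, x⟩) := by
    intro k
    have : (fun x : X k => E ⟨k, x⟩) = E ∘ Sigma.mk k := rfl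
    rw [this]
    exact hembE.comp IsEmbedding.sigmaMk
  have he'emb : ∀ k, IsEmbedding (e' k) := fun k => (hembk k).codRestrict _ _
  have he'dense : ∀ k, DenseRange (e' k) := fun k => denseRange_into_closure _ _
  have hval_range : ∀ k, (Subtype.val ⁻¹' (A k) : Set (↥(closure (A k)))) =
      Set.range (e' k) := by
    intro k
    ext q
    simp only [Set.mem_preimage, Set.mem_range]
    constructor
    · rintro ⟨x, hx⟩
      exact ⟨x, Subtype.ext hx⟩
    · rintro ⟨x, rfl⟩
      exact ⟨x, rfl⟩
  have hA_sus : ∀ k, A k ∈ SuslinF Y := by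
    intro k
    have := suslin_inter_closed hSus (isClosed_closure (s := A k))
    rwa [hAL k] at this
  have he'sus : ∀ k, Set.range (e' k) ∈ SuslinF (↥(closure (A k))) := by
    intro k
    have hpre := suslin_preimage (X := ↥(closure (A k))) (g := Subtype.val)
      continuous_subtype_val (hA_sus k)
    rwa [hval_range k] at hpre
  set f : ℕ → Ordinal.{0} := fun k => ComplIn (↥(closure (A k))) (Set.range (e' k))
    with hfdef
  have hattained : ∀ k, f k ∈ AttainedCompl (X k) := fun k =>
    ⟨↥(closure (A k)), inferInstance, e' k,
      ⟨inferInstance, inferInstance, he'emb k, he'dense k⟩, he'sus k, rfl⟩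
  have hγmem : γ ∈ cplSet Y (Set.range E) := by
    rw [hγval]; exact complIn_mem hSus
  have hγω : γ ≤ omega1 := hγmem.1
  have hfle : ∀ k, f k ≤ omega1 := fun k => complIn_le_omega1 (he'sus k)
  have hbdd : BddAbove (Set.range f) := ⟨omega1, by rintro _ ⟨k, rfl⟩; exact hfle k⟩
  have hfγ : ∀ k, f k ≤ γ := by
    intro k
    rcases lt_or_ge γ omega1 with hγlt | hγge
    · have hFB : Set.range E ∈ FBorel Y γ := cplSet_fborel hγlt hγmem
      have hpre := FBorel_preimage (X := ↥(closure (A k))) (g := Subtype.val)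
        continuous_subtype_val γ _ hFB
      have hpre_eq : (Subtype.val ⁻¹' (Set.range E) : Set (↥(closure (A k)))) =
          Set.range (e' k) := by
        ext q
        constructor
        · intro hq
          have hqA : q.val ∈ A k := (Set.ext_iff.1 (hAL k) q.val).1 ⟨hq, q.2⟩
          obtain ⟨x, hx⟩ := hqA
          exact ⟨x, Subtype.ext hx⟩
        · rintro ⟨x, rfl⟩
          exact ⟨⟨k, x⟩, rfl⟩
      exact complIn_le (mem_cplSet_of_lt hγlt
        ((congrArg (fun S => S ∈ FBorel (↥(closure (A k))) γ) hpre_eq).mp hpre))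
    · exact le_trans (hfle k) hγge
  have hsup_le : (⨆ k, f k) ≤ γ := ciSup_le hfγ
  have h1f : 1 ≤ f k₀ := one_le_complIn_of_noncompact
    ⟨inferInstance, inferInstance, he'emb k₀, he'dense k₀⟩ (he'sus k₀) hk₀
  have h1γ' : 1 ≤ ⨆ k, f k := le_trans h1f (le_ciSup hbdd k₀)
  have hγ_le : γ ≤ ⨆ k, f k := by
    rcases lt_or_ge (⨆ k, f k) omega1 with hslt | hsge
    · have hAF : ∀ k, A k ∈ FBorel Y (f k) := by
        intro k
        have hmem := complIn_mem (he'sus k)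
        have hfk_lt : f k < omega1 := lt_of_le_of_lt (le_ciSup hbdd k) hslt
        have hFB := cplSet_fborel hfk_lt hmem
        have himg := FBorel_image ((isClosed_closure (s := A k)).isClosedEmbedding_subtypeVal)
          (f k) _ hFB
        have himg_eq : Subtype.val '' (Set.range (e' k)) = A k := by
          ext q
          constructor
          · rintro ⟨q', ⟨x, rfl⟩, rfl⟩
            exact ⟨x, rfl⟩
          · rintro ⟨x, rfl⟩
            exact ⟨e' k x, ⟨x, rfl⟩, rfl⟩
        exact (congrArg (fun S => S ∈ FBorel Y (f k)) himg_eq).mp himg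
      have hPex : ∀ k, ∃ P, P ∈ FBorel Y 1 ∧ A k ⊆ P ∧ P ⊆ U k := fun k =>
        suslin_separation (hA_sus k) (hUopen k) (hAU k)
      choose P hPF hAP hPU using hPex
      have hPdisj : ∀ j k, j ≠ k → P j ∩ P k = ∅ := by
        intro j k hjk
        apply Set.eq_empty_of_subset_empty
        calc P j ∩ P k ⊆ U j ∩ U k := Set.inter_subset_inter (hPU j) (hPU k)
          _ = ∅ := hdisjU j k hjk
      have hunion : Set.range E ∈ FBorel Y (⨆ k, f k) := by
        rw [hrangeE]
        exact union_mem_FBorel h1γ' (fun k => le_ciSup hbdd k) hAF hPF hAP hPdisj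
      rw [hγval]
      exact complIn_le (mem_cplSet_of_lt hslt hunion)
    · exact le_trans hγω hsge
  exact ⟨f, hattained, le_antisymm hγ_le hsup_le⟩

end Aux

/-- For a countable family of K-analytic Tychonoff spaces, at least one
of which is not compact, the set of complexities attained by the topological sum consists
exactly of the suprema of selectors of the sets of attained complexities. -/
theorem attainedCompl_sigma (X : ℕ → Type u) [∀ k, TopologicalSpace (X k)]
    [∀ k, T35Space (X k)] (hK : ∀ k, IsKAnalytic (X k))
    (hnc : ∃ k, ¬ CompactSpace (X k)) :
    AttainedCompl ((k : ℕ) × X k) =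
      { γ : Ordinal.{0} | ∃ f : ℕ → Ordinal.{0},
          (∀ k, f k ∈ AttainedCompl (X k)) ∧ γ = ⨆ k, f k } := by
  ext γ
  constructor
  · intro h
    exact attainedCompl_sigma_subset X hnc h
  · rintro ⟨f, hf, rfl⟩
    exact iSup_mem_attainedCompl_sigma X hnc hf

end FBorelPaper
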